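/- With the same setup (equal path loss exponent α, independent Rayleigh nearest distances with intensities λ_1, λ_2, powers P_1 > P_2, bias B > 1), the probability that a user is an offloaded user, i.e., P(P_2 Z_2^{−α} ≤ P_1 Z_1^{−α} < B P_2 Z_2^{−α}), equals λ_2 (B P_2/P_1)^{2/α} / (λ_1 + λ_2 (B P_2/P_1)^{2/α}) − λ_2 (P_2/P_1)^{2/α} / (λ_1 + λ_2 (P_2/P_1)^{2/α}). -/

import Mathlib

open MeasureTheory ProbabilityTheory Real Set

lemma my_tail_ge {Ω : Type*} [MeasurableSpace Ω] (μ : Measure Ω) [IsProbabilityMeasure μ]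
    (Z : Ω → ℝ) (c : ℝ)
    (h : ∀ z ≥ (0:ℝ), μ {ω | Z ω > z} = ENNReal.ofReal (Real.exp (-(c * z ^ 2))))
    {z : ℝ} (hz : 0 < z) :
    μ {ω | z ≤ Z ω} = ENNReal.ofReal (Real.exp (-(c * z ^ 2))) := by
  apply le_antisymm
  · have hcont : Filter.Tendsto (fun y : ℝ => ENNReal.ofReal (Real.exp (-(c * y ^ 2))))
        (nhdsWithin z (Set.Ico 0 z)) (nhds (ENNReal.ofReal (Real.exp (-(c * z ^ 2))))) := by
      apply Filter.Tendsto.mono_left _ nhdsWithin_le_nhds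
      exact (ENNReal.continuous_ofReal.comp (by fun_prop)).tendsto z
    have hne : (nhdsWithin z (Set.Ico 0 z)).NeBot := by
      apply IsLUB.nhdsWithin_neBot ?_ ?_
      · exact isLUB_Ico hz
      · exact Set.nonempty_Ico.mpr hz
    refine ge_of_tendsto hcont ?_
    filter_upwards [self_mem_nhdsWithin] with y hy
    rw [← h y hy.1]
    exact measure_mono fun ω hω => lt_of_lt_of_le hy.2 hω
  · rw [← h z hz.le]
    exact measure_mono fun ω (hω : z < Z ω) => hω.le

lemma my_prob_ge_linear {Ω : Type*} [MeasurableSpace Ω] (μ : Measure Ω) [IsProbabilityMeasure μ]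
    (lam1 lam2 : ℝ) (hlam1 : 0 < lam1) (hlam2 : 0 < lam2)
    (Z1 Z2 : Ω → ℝ)
    (hZ1 : ∀ z ≥ (0:ℝ), μ {ω | Z1 ω > z} = ENNReal.ofReal (Real.exp (-(π * lam1 * z ^ 2))))
    (hZ2 : ∀ z ≥ (0:ℝ), μ {ω | Z2 ω > z} = ENNReal.ofReal (Real.exp (-(π * lam2 * z ^ 2))))
    (hindep : IndepFun Z1 Z2 μ)
    (hm1 : Measurable Z1) (hm2 : Measurable Z2)
    {t : ℝ} (ht : 0 < t) :
    μ {ω | t * Z1 ω ≤ Z2 ω} = ENNReal.ofReal (lam1 / (lam1 + lam2 * t ^ 2)) := by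
  have hπ1 : 0 < π * lam1 := by positivity
  have hπ2 : 0 < π * lam2 := by positivity
  set ν₁ : Measure ℝ := μ.map Z1 with hν₁
  set ν₂ : Measure ℝ := μ.map Z2 with hν₂
  have hpν₁ : IsProbabilityMeasure ν₁ := Measure.isProbabilityMeasure_map hm1.aemeasurable
  have hpν₂ : IsProbabilityMeasure ν₂ := Measure.isProbabilityMeasure_map hm2.aemeasurable
  have hν₁tail : ∀ z ≥ (0:ℝ), ν₁ {x | x > z} = ENNReal.ofReal (Real.exp (-(π * lam1 * z ^ 2))) := by
    intro z hz
    exact (Measure.map_apply hm1 (measurableSet_Ioi (a := z))).trans (hZ1 z hz)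
  have hν₂tail : ∀ z ≥ (0:ℝ), ν₂ {x | x > z} = ENNReal.ofReal (Real.exp (-(π * lam2 * z ^ 2))) := by
    intro z hz
    exact (Measure.map_apply hm2 (measurableSet_Ioi (a := z))).trans (hZ2 z hz)
  -- a.e. positivity for ν₁
  have hν₁pos : ∀ᵐ x ∂ν₁, 0 < x := by
    rw [ae_iff]
    have h0 : ν₁ {x | x > 0} = 1 := by
      rw [hν₁tail 0 le_rfl]; norm_num
    have hc : ν₁ {x | ¬ 0 < x} = ν₁ (Ioi (0:ℝ))ᶜ := rfl
    rw [hc, measure_compl measurableSet_Ioi (measure_ne_top _ _),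
      show ν₁ (Ioi (0:ℝ)) = 1 from h0, measure_univ, tsub_self]
  -- closed tail for ν₂
  have hν₂ge : ∀ z > (0:ℝ), ν₂ {x | z ≤ x} = ENNReal.ofReal (Real.exp (-(π * lam2 * z ^ 2))) := by
    intro z hz
    exact my_tail_ge ν₂ id (π * lam2) hν₂tail hz
  -- product decomposition
  have hmap : μ.map (fun ω => (Z1 ω, Z2 ω)) = ν₁.prod ν₂ :=
    (ProbabilityTheory.indepFun_iff_map_prod_eq_prod_map_map hm1.aemeasurable hm2.aemeasurable).mp hindep
  have hSmeas : MeasurableSet {p : ℝ × ℝ | t * p.1 ≤ p.2} :=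
    measurableSet_le (measurable_fst.const_mul t) measurable_snd
  have step1 : μ {ω | t * Z1 ω ≤ Z2 ω} = ∫⁻ x, ν₂ {y | t * x ≤ y} ∂ν₁ := by
    have : μ {ω | t * Z1 ω ≤ Z2 ω} = (μ.map (fun ω => (Z1 ω, Z2 ω))) {p : ℝ × ℝ | t * p.1 ≤ p.2} := by
      rw [Measure.map_apply (hm1.prodMk hm2) hSmeas]; rfl
    rw [this, hmap, Measure.prod_apply hSmeas]; rfl
  have step2 : ∫⁻ x, ν₂ {y | t * x ≤ y} ∂ν₁
      = ∫⁻ x, ENNReal.ofReal (Real.exp (-(π * lam2 * t ^ 2 * x ^ 2))) ∂ν₁ := by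
    refine lintegral_congr_ae ?_
    filter_upwards [hν₁pos] with x hx
    rw [hν₂ge (t * x) (by positivity)]
    ring_nf
  set a := π * lam2 * t ^ 2 with ha
  have ha0 : 0 < a := by positivity
  set b := π * lam1 / a with hb
  have hb0 : 0 < b := by rw [hb]; positivity
  have step3 : ∫⁻ x, ENNReal.ofReal (Real.exp (-(a * x ^ 2))) ∂ν₁
      = ∫⁻ s in Ioi (0:ℝ), ν₁ {x | s < Real.exp (-(a * x ^ 2))} :=
    lintegral_eq_lintegral_meas_lt ν₁ (Filter.Eventually.of_forall fun x => (Real.exp_pos _).le)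
      (Measurable.aemeasurable (by fun_prop))
  have step4 : ∀ s ∈ Ioi (0:ℝ), ν₁ {x | s < Real.exp (-(a * x ^ 2))}
      = ENNReal.ofReal (1 - s ^ b) := by
    intro s hs
    have hs0 : 0 < s := hs
    by_cases h1 : s < 1
    · have hlog : Real.log s < 0 := Real.log_neg hs0 h1
      set cc := (- Real.log s) / a with hcc
      have hcc0 : 0 < cc := div_pos (by linarith) ha0
      have hset : {x : ℝ | s < Real.exp (-(a * x ^ 2))} = {x : ℝ | x ^ 2 < cc} := by
        ext x
        simp only [mem_setOf_eq]
        rw [← Real.log_lt_iff_lt_exp hs0, hcc, lt_div_iff₀ ha0]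
        constructor <;> intro h <;> nlinarith
      rw [hset]
      have hae : ν₁ {x : ℝ | x ^ 2 < cc} = ν₁ {x : ℝ | Real.sqrt cc ≤ x}ᶜ := by
        refine measure_congr ?_
        rw [Filter.eventuallyEq_set]
        filter_upwards [hν₁pos] with x hx
        simp only [mem_setOf_eq, mem_compl_iff, not_le]
        exact (Real.lt_sqrt hx.le).symm
      have htail : ν₁ {x : ℝ | Real.sqrt cc ≤ x}
          = ENNReal.ofReal (Real.exp (-(π * lam1 * cc))) := by
        have := my_tail_ge ν₁ id (π * lam1) hν₁tail (Real.sqrt_pos.mpr hcc0)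
        rwa [Real.sq_sqrt hcc0.le] at this
      rw [hae, measure_compl ?_ (measure_ne_top _ _), measure_univ, htail]
      · have hsb : s ^ b = Real.exp (-(π * lam1 * cc)) := by
          rw [Real.rpow_def_of_pos hs0, hb, hcc]
          congr 1
          field_simp
        rw [hsb, ENNReal.ofReal_sub _ (Real.exp_pos _).le, ENNReal.ofReal_one]
      · exact measurableSet_Ici
    · push_neg at h1
      have hset : {x : ℝ | s < Real.exp (-(a * x ^ 2))} = ∅ := by
        ext x
        simp only [mem_setOf_eq, mem_empty_iff_false, iff_false, not_lt]
        calc Real.exp (-(a * x ^ 2)) ≤ 1 := Real.exp_le_one_iff.mpr (by nlinarith)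
        _ ≤ s := h1
      rw [hset, measure_empty]
      symm
      rw [ENNReal.ofReal_eq_zero, sub_nonpos]
      exact Real.one_le_rpow h1 hb0.le
  have step5 : ∫⁻ s in Ioi (0:ℝ), ν₁ {x | s < Real.exp (-(a * x ^ 2))}
      = ∫⁻ s in Ioi (0:ℝ), ENNReal.ofReal (1 - s ^ b) :=
    setLIntegral_congr_fun measurableSet_Ioi step4
  have hsplit : Ioi (0:ℝ) = Ioo 0 1 ∪ Ici 1 := (Ioo_union_Ici_eq_Ioi (by norm_num)).symm
  have hdisj : Disjoint (Ioo (0:ℝ) 1) (Ici 1) :=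
    Set.disjoint_left.mpr fun x hx hx' => absurd hx' (not_le.mpr hx.2)
  have hzero : ∫⁻ s in Ici (1:ℝ), ENNReal.ofReal (1 - s ^ b) = 0 := by
    rw [setLIntegral_congr_fun measurableSet_Ici
      (fun s hs => ?_), lintegral_zero]
    rw [ENNReal.ofReal_eq_zero, sub_nonpos]
    exact Real.one_le_rpow hs hb0.le
  have hIoo : ∫⁻ s in Ioo (0:ℝ) 1, ENNReal.ofReal (1 - s ^ b)
      = ENNReal.ofReal (1 - 1 / (b + 1)) := by
    have hii : IntervalIntegrable (fun s : ℝ => s ^ b) volume 0 1 :=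
      intervalIntegral.intervalIntegrable_rpow' (by linarith)
    have hint : IntegrableOn (fun s : ℝ => 1 - s ^ b) (Ioo 0 1) volume := by
      have : IntegrableOn (fun s : ℝ => 1 - s ^ b) (Ioc 0 1) volume := by
        have := (intervalIntegrable_iff_integrableOn_Ioc_of_le (by norm_num : (0:ℝ) ≤ 1)).mp
          ((intervalIntegrable_const (c := (1:ℝ))).sub hii)
        exact this
      exact this.mono_set Ioo_subset_Ioc_self
    have hnn : 0 ≤ᵐ[volume.restrict (Ioo (0:ℝ) 1)] fun s : ℝ => 1 - s ^ b := by
      rw [Filter.EventuallyLE, ae_restrict_iff' measurableSet_Ioo]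
      refine Filter.Eventually.of_forall fun s hs => ?_
      simp only [Pi.zero_apply, sub_nonneg]
      exact Real.rpow_le_one hs.1.le hs.2.le hb0.le
    rw [← ofReal_integral_eq_lintegral_ofReal hint hnn]
    congr 1
    rw [← integral_Ioc_eq_integral_Ioo,
      ← intervalIntegral.integral_of_le (by norm_num : (0:ℝ) ≤ 1),
      intervalIntegral.integral_sub intervalIntegrable_const hii,
      intervalIntegral.integral_const, integral_rpow (Or.inl (by linarith)),
      Real.one_rpow, Real.zero_rpow (by positivity)]
    norm_num
  have harith : 1 - 1 / (b + 1) = lam1 / (lam1 + lam2 * t ^ 2) := by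
    rw [hb, ha]
    have h1 : π * lam2 * t ^ 2 ≠ 0 := ne_of_gt (by positivity)
    have h2 : lam1 + lam2 * t ^ 2 ≠ 0 := ne_of_gt (by positivity)
    have h3 : π * lam1 / (π * lam2 * t ^ 2) + 1 ≠ 0 := ne_of_gt (by positivity)
    field_simp
    ring
  rw [step1, step2, step3, step5, hsplit, lintegral_union measurableSet_Ici hdisj,
    hzero, add_zero, hIoo, harith]

lemma my_aux_le {z1 z2 P Q α : ℝ} (h1 : 0 < z1) (h2 : 0 < z2) (hP : 0 < P) (hQ : 0 < Q)
    (hα : 0 < α) :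
    Q * z2 ^ (-α) ≤ P * z1 ^ (-α) ↔ (Q / P) ^ α⁻¹ * z1 ≤ z2 := by
  rw [Real.rpow_neg h1.le, Real.rpow_neg h2.le, ← div_eq_mul_inv, ← div_eq_mul_inv,
    div_le_div_iff₀ (Real.rpow_pos_of_pos h2 α) (Real.rpow_pos_of_pos h1 α),
    ← Real.rpow_le_rpow_iff (by positivity : (0:ℝ) ≤ (Q / P) ^ α⁻¹ * z1) h2.le hα,
    Real.mul_rpow (by positivity) h1.le, ← Real.rpow_mul (by positivity),
    inv_mul_cancel₀ (ne_of_gt hα), Real.rpow_one, div_mul_eq_mul_div, div_le_iff₀ hP,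
    mul_comm (z2 ^ α) P]

lemma my_aux_lt {z1 z2 P Q α : ℝ} (h1 : 0 < z1) (h2 : 0 < z2) (hP : 0 < P) (hQ : 0 < Q)
    (hα : 0 < α) :
    P * z1 ^ (-α) < Q * z2 ^ (-α) ↔ z2 < (Q / P) ^ α⁻¹ * z1 := by
  rw [Real.rpow_neg h1.le, Real.rpow_neg h2.le, ← div_eq_mul_inv, ← div_eq_mul_inv,
    div_lt_div_iff₀ (Real.rpow_pos_of_pos h1 α) (Real.rpow_pos_of_pos h2 α),
    ← Real.rpow_lt_rpow_iff h2.le (by positivity : (0:ℝ) ≤ (Q / P) ^ α⁻¹ * z1) hα,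
    Real.mul_rpow (by positivity) h1.le, ← Real.rpow_mul (by positivity),
    inv_mul_cancel₀ (ne_of_gt hα), Real.rpow_one, div_mul_eq_mul_div, lt_div_iff₀ hP,
    mul_comm (z2 ^ α) P]

/-- **Offloaded-user probability.**
With independent Rayleigh nearest distances (intensities `λ₁, λ₂`), equal path loss
exponent `α > 2`, powers `P₁ > P₂ > 0` and bias `B > 1`, the probability that the
typical user is offloaded, i.e. `P(P₂ Z₂^{−α} ≤ P₁ Z₁^{−α} < B P₂ Z₂^{−α})`, equals
`λ₂ (B P₂/P₁)^{2/α} / (λ₁ + λ₂ (B P₂/P₁)^{2/α}) − λ₂ (P₂/P₁)^{2/α} / (λ₁ + λ₂ (P₂/P₁)^{2/α})`. -/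
theorem offloaded_user_probability
    {Ω : Type*} [MeasurableSpace Ω] (μ : Measure Ω) [IsProbabilityMeasure μ]
    (lam1 lam2 : ℝ) (hlam1 : 0 < lam1) (hlam2 : 0 < lam2)
    (α : ℝ) (hα : 2 < α) (P1 P2 : ℝ) (hP2 : 0 < P2) (hP12 : P2 < P1)
    (B : ℝ) (hB : 1 < B)
    (Z1 Z2 : Ω → ℝ)
    (hZ1 : ∀ z ≥ (0:ℝ), μ {ω | Z1 ω > z} = ENNReal.ofReal (Real.exp (-(π * lam1 * z ^ 2))))
    (hZ2 : ∀ z ≥ (0:ℝ), μ {ω | Z2 ω > z} = ENNReal.ofReal (Real.exp (-(π * lam2 * z ^ 2))))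
    (hindep : IndepFun Z1 Z2 μ)
    (hm1 : Measurable Z1) (hm2 : Measurable Z2) :
    μ {ω | P2 * (Z2 ω) ^ (-α) ≤ P1 * (Z1 ω) ^ (-α) ∧
           P1 * (Z1 ω) ^ (-α) < B * P2 * (Z2 ω) ^ (-α)} =
      ENNReal.ofReal
        (lam2 * (B * P2 / P1) ^ (2 / α) / (lam1 + lam2 * (B * P2 / P1) ^ (2 / α))
          - lam2 * (P2 / P1) ^ (2 / α) / (lam1 + lam2 * (P2 / P1) ^ (2 / α))) := by
  have hP1 : 0 < P1 := hP2.trans hP12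
  have hα0 : 0 < α := by linarith
  set c : ℝ := (P2 / P1) ^ α⁻¹ with hc
  set c' : ℝ := (B * P2 / P1) ^ α⁻¹ with hc'
  have hcpos : 0 < c := Real.rpow_pos_of_pos (by positivity) _
  have hc'pos : 0 < c' := Real.rpow_pos_of_pos (by positivity) _
  have hcc' : c < c' := by
    refine Real.rpow_lt_rpow (by positivity) ?_ (inv_pos.mpr hα0)
    rw [div_lt_div_iff₀ hP1 hP1]
    nlinarith [mul_pos hP2 hP1]
  -- a.e. positivity
  have hpos1 : ∀ᵐ ω ∂μ, 0 < Z1 ω := by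
    rw [ae_iff]
    have h0 : μ (Z1 ⁻¹' Ioi 0) = 1 := (show μ (Z1 ⁻¹' Ioi 0) = _ from hZ1 0 le_rfl).trans (by norm_num)
    have hc0 : μ {ω | ¬ 0 < Z1 ω} = μ (Z1 ⁻¹' Ioi 0)ᶜ := rfl
    rw [hc0, measure_compl (hm1 measurableSet_Ioi) (measure_ne_top _ _), h0, measure_univ,
      tsub_self]
  have hpos2 : ∀ᵐ ω ∂μ, 0 < Z2 ω := by
    rw [ae_iff]
    have h0 : μ (Z2 ⁻¹' Ioi 0) = 1 := (show μ (Z2 ⁻¹' Ioi 0) = _ from hZ2 0 le_rfl).trans (by norm_num)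
    have hc0 : μ {ω | ¬ 0 < Z2 ω} = μ (Z2 ⁻¹' Ioi 0)ᶜ := rfl
    rw [hc0, measure_compl (hm2 measurableSet_Ioi) (measure_ne_top _ _), h0, measure_univ,
      tsub_self]
  set A : Set Ω := {ω | c * Z1 ω ≤ Z2 ω} with hA
  set A' : Set Ω := {ω | c' * Z1 ω ≤ Z2 ω} with hA'
  have hAm : MeasurableSet A := measurableSet_le (hm1.const_mul c) hm2
  have hA'm : MeasurableSet A' := measurableSet_le (hm1.const_mul c') hm2
  have hkeyc : μ A = ENNReal.ofReal (lam1 / (lam1 + lam2 * c ^ 2)) :=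
    my_prob_ge_linear μ lam1 lam2 hlam1 hlam2 Z1 Z2 hZ1 hZ2 hindep hm1 hm2 hcpos
  have hkeyc' : μ A' = ENNReal.ofReal (lam1 / (lam1 + lam2 * c' ^ 2)) :=
    my_prob_ge_linear μ lam1 lam2 hlam1 hlam2 Z1 Z2 hZ1 hZ2 hindep hm1 hm2 hc'pos
  have hEae : {ω | P2 * (Z2 ω) ^ (-α) ≤ P1 * (Z1 ω) ^ (-α) ∧
      P1 * (Z1 ω) ^ (-α) < B * P2 * (Z2 ω) ^ (-α)} =ᵐ[μ] (A \ A' : Set Ω) := by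
    rw [Filter.eventuallyEq_set]
    filter_upwards [hpos1, hpos2] with ω h1 h2
    have e1 : P2 * (Z2 ω) ^ (-α) ≤ P1 * (Z1 ω) ^ (-α) ↔ c * Z1 ω ≤ Z2 ω :=
      my_aux_le h1 h2 hP1 hP2 hα0
    have e2 : P1 * (Z1 ω) ^ (-α) < B * P2 * (Z2 ω) ^ (-α) ↔ Z2 ω < c' * Z1 ω :=
      my_aux_lt h1 h2 hP1 (by positivity) hα0
    simp only [mem_setOf_eq, mem_diff, hA, hA', e1, e2, not_le]
  rw [measure_congr hEae, ← Set.diff_inter_self_eq_diff,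
    measure_diff inter_subset_right ((hA'm.inter hAm).nullMeasurableSet) (measure_ne_top _ _)]
  have hinter : μ (A' ∩ A) = μ A' := by
    refine measure_congr ?_
    rw [Filter.eventuallyEq_set]
    filter_upwards [hpos1] with ω h1
    simp only [mem_inter_iff, hA, hA', mem_setOf_eq, and_iff_left_iff_imp]
    intro h
    calc c * Z1 ω ≤ c' * Z1 ω := mul_le_mul_of_nonneg_right hcc'.le h1.le
    _ ≤ Z2 ω := h
  rw [hinter, hkeyc, hkeyc', ← ENNReal.ofReal_sub _ (by positivity)]
  congr 1
  have hc2 : c ^ 2 = (P2 / P1) ^ (2 / α) := by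
    rw [hc, ← Real.rpow_natCast ((P2 / P1) ^ α⁻¹) 2, ← Real.rpow_mul (by positivity)]
    norm_num
    rw [inv_mul_eq_div]
  have hc'2 : c' ^ 2 = (B * P2 / P1) ^ (2 / α) := by
    rw [hc', ← Real.rpow_natCast ((B * P2 / P1) ^ α⁻¹) 2, ← Real.rpow_mul (by positivity)]
    norm_num
    rw [inv_mul_eq_div]
  rw [hc2, hc'2]
  have hX : (0:ℝ) < (P2 / P1) ^ (2 / α) := Real.rpow_pos_of_pos (by positivity) _
  have hX' : (0:ℝ) < (B * P2 / P1) ^ (2 / α) := Real.rpow_pos_of_pos (by positivity) _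
  have d1 : lam1 + lam2 * (P2 / P1) ^ (2 / α) ≠ 0 := ne_of_gt (by positivity)
  have d2 : lam1 + lam2 * (B * P2 / P1) ^ (2 / α) ≠ 0 := ne_of_gt (by positivity)
  field_simp
  ring
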